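/- Every signed-graph circuit (an Eulerian cycle-tree containing no proper Eulerian sub-cycle-tree) is of exactly one of three types: (I) a single balanced cycle; (II) two edge-disjoint unbalanced cycles sharing exactly one common vertex; (III) two vertex-disjoint unbalanced cycles joined by a simple path of positive length meeting each cycle only at its respective endpoint. -/

import Mathlib

open Finset

/-- An oriented signed graph: each edge has an ordered pair of end-vertices and
an orientation value (`±1`) at each of its two ends.  The sign of an edge `e` is
`-ε₁(e)·ε₂(e)`. -/
structure OSG (V E : Type) where
  ends : E → V × V
  eps : E → ℤ × ℤ
  eps1 : ∀ e, (eps e).1 = 1 ∨ (eps e).1 = -1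
  eps2 : ∀ e, (eps e).2 = 1 ∨ (eps e).2 = -1

namespace OSG

variable {V E : Type} [DecidableEq V] [DecidableEq E] [Fintype E]

/-- The sign `σ(e)` of an edge. -/
def sign (G : OSG V E) (e : E) : ℤ := -((G.eps e).1 * (G.eps e).2)

/-- Boundary of an integer-valued function at a vertex. -/
def boundary (G : OSG V E) (f : E → ℤ) (v : V) : ℤ :=
  ∑ e : E, ((if (G.ends e).1 = v then (G.eps e).1 * f e else 0) +
            (if (G.ends e).2 = v then (G.eps e).2 * f e else 0))

/-- An integral flow: boundary vanishes at every vertex. -/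
def IsFlow (G : OSG V E) (f : E → ℤ) : Prop := ∀ v, G.boundary f v = 0

/-- Boundary of a real-valued function at a vertex. -/
def boundaryR (G : OSG V E) (f : E → ℝ) (v : V) : ℝ :=
  ∑ e : E, ((if (G.ends e).1 = v then ((G.eps e).1 : ℝ) * f e else 0) +
            (if (G.ends e).2 = v then ((G.eps e).2 : ℝ) * f e else 0))

/-- A real flow. -/
def IsFlowR (G : OSG V E) (f : E → ℝ) : Prop := ∀ v, G.boundaryR f v = 0

/-- A walk of length `n`: vertices `u 0, …, u n`, edges `x 0, …, x (n-1)`, where the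
`i`-th edge joins `u i` and `u (i+1)`; `fwd i` records whether the edge is traversed
from its first end to its second end. -/
structure Walk (G : OSG V E) (n : ℕ) where
  u : Fin (n + 1) → V
  x : Fin n → E
  fwd : Fin n → Bool
  compat_t : ∀ i : Fin n, fwd i = true → G.ends (x i) = (u i.castSucc, u i.succ)
  compat_f : ∀ i : Fin n, fwd i = false → G.ends (x i) = (u i.succ, u i.castSucc)

variable {G : OSG V E}

/-- A closed walk. -/
def Walk.IsClosed {n : ℕ} (W : G.Walk n) : Prop := W.u 0 = W.u (Fin.last n)

/-- The sign of a walk: product of the signs of its edges with multiplicity. -/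
def Walk.sgn {n : ℕ} (W : G.Walk n) : ℤ := ∏ i : Fin n, G.sign (W.x i)

/-- The support (underlying edge set) of a walk. -/
def Walk.support {n : ℕ} (W : G.Walk n) : Finset E := Finset.image W.x Finset.univ

/-- The number of occurrences of an edge in a walk. -/
def Walk.edgeCount {n : ℕ} (W : G.Walk n) (e : E) : ℕ :=
  (Finset.univ.filter (fun i => W.x i = e)).card

/-- The edge multiset of a walk. -/
def Walk.edgeMultiset {n : ℕ} (W : G.Walk n) : Multiset E :=
  Multiset.map W.x Finset.univ.val

/-- A direction `ε_W` of a walk: `a i = ε_W(u_i, x_{i+1})` is the value at the initial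
vertex of the `i`-th edge, `b i = ε_W(u_{i+1}, x_{i+1})` the value at its terminal
vertex; consecutive incidence values at an internal vertex cancel. -/
structure Direction {n : ℕ} (W : G.Walk n) where
  a : Fin n → ℤ
  b : Fin n → ℤ
  a_unit : ∀ i, a i = 1 ∨ a i = -1
  b_unit : ∀ i, b i = 1 ∨ b i = -1
  edge_rel : ∀ i, a i * b i = - G.sign (W.x i)
  consec : ∀ (i : Fin n) (h : i.val + 1 < n), b i + a ⟨i.val + 1, h⟩ = 0

/-- The closing condition for a direction of a closed walk:
`ε_W(u_0,x_1) + ε_W(u_n,x_n) = 0`. -/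
def Direction.IsClosedDir {n : ℕ} {W : G.Walk n} (d : Direction W) (hn : 0 < n) : Prop :=
  d.a ⟨0, hn⟩ + d.b ⟨n - 1, by omega⟩ = 0

/-- Midway-back avoided: whenever `u_α = u_β` (`α < β < n`),
`ε_W(u_β, x_β) = ε_W(u_α, x_{α+1})`. -/
def Direction.MBA {n : ℕ} {W : G.Walk n} (d : Direction W) : Prop :=
  ∀ (α β : Fin n), α.val < β.val → W.u α.castSucc = W.u β.castSucc →
    d.b ⟨β.val - 1, by have := β.isLt; omega⟩ = d.a α

/-- The orientation that occurrence `i` of the walk induces on its edge, recorded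
as the pair of values at the first and second ends of the edge. -/
def Direction.occOrient {n : ℕ} {W : G.Walk n} (d : Direction W) (i : Fin n) : ℤ × ℤ :=
  if W.fwd i then (d.a i, d.b i) else (d.b i, d.a i)

/-- A directed Eulerian walk: a directed closed walk of positive sign whose direction
induces the same orientation on all occurrences of each repeated edge. -/
def Direction.IsEulerian {n : ℕ} {W : G.Walk n} (d : Direction W) (hn : 0 < n) : Prop :=
  W.IsClosed ∧ d.IsClosedDir hn ∧ W.sgn = 1 ∧
    ∀ p q : Fin n, W.x p = W.x q → d.occOrient p = d.occOrient q

/-- A minimal (directed) Eulerian walk: no Eulerian walk is properly contained in it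
as edge multisets. -/
def Direction.IsMinimalEulerian {n : ℕ} {W : G.Walk n} (d : Direction W) (hn : 0 < n) : Prop :=
  d.IsEulerian hn ∧
    ∀ (m : ℕ) (hm : 0 < m) (W' : G.Walk m) (d' : Direction W'),
      d'.IsEulerian hm → W'.edgeMultiset ≤ W.edgeMultiset →
        W'.edgeMultiset = W.edgeMultiset

/-- The coupling `[ε, ε_W](x_i)` of the ambient orientation with the walk direction at
occurrence `i` (computed at the terminal vertex of the occurrence). -/
def Direction.coupleAt {n : ℕ} {W : G.Walk n} (d : Direction W) (i : Fin n) : ℤ :=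
  (if W.fwd i then (G.eps (W.x i)).2 else (G.eps (W.x i)).1) * d.b i

/-- The characteristic vector `f_{(W,ε_W)}` of a directed walk. -/
def Direction.charVec {n : ℕ} {W : G.Walk n} (d : Direction W) : E → ℤ :=
  fun e => ∑ i : Fin n, if W.x i = e then d.coupleAt i else 0

/-- The reorientation `ε_f` of `G` along the negative edges of `f : E → ℝ`. -/
noncomputable def reorientR (G : OSG V E) (f : E → ℝ) : OSG V E where
  ends := G.ends
  eps := fun e => if f e < 0 then (-(G.eps e).1, -(G.eps e).2) else G.eps e
  eps1 := by
    intro e; by_cases h : f e < 0 <;> rcases G.eps1 e with h1 | h1 <;> simp [h, h1]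
  eps2 := by
    intro e; by_cases h : f e < 0 <;> rcases G.eps2 e with h1 | h1 <;> simp [h, h1]

/-- Vertex set spanned by an edge set. -/
def verts (G : OSG V E) (S : Finset E) : Finset V :=
  S.image (fun e => (G.ends e).1) ∪ S.image (fun e => (G.ends e).2)

/-- Adjacency via an edge of `S`. -/
def adjOn (G : OSG V E) (S : Finset E) (v w : V) : Prop :=
  ∃ e ∈ S, G.ends e = (v, w) ∨ G.ends e = (w, v)

/-- Reachability inside the subgraph induced by `S`. -/
def Reach (G : OSG V E) (S : Finset E) : V → V → Prop :=
  Relation.ReflTransGen (G.adjOn S)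

/-- Connectivity of the subgraph induced by `S`. -/
def ConnectedOn (G : OSG V E) (S : Finset E) : Prop :=
  ∀ v ∈ G.verts S, ∀ w ∈ G.verts S, G.Reach S v w

/-- `v` is a cut-point of the subgraph induced by `S`: two vertices of the subgraph,
distinct from `v`, are joined in the subgraph but not after deleting `v`. -/
def IsCutPoint (G : OSG V E) (S : Finset E) (v : V) : Prop :=
  ∃ a ∈ G.verts S, ∃ b ∈ G.verts S, a ≠ v ∧ b ≠ v ∧ G.Reach S a b ∧
    ¬ Relation.ReflTransGen (fun p q => p ≠ v ∧ q ≠ v ∧ G.adjOn S p q) a b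

/-- `S` is the edge set of a cycle (simple closed path). -/
def IsCycleSet (G : OSG V E) (S : Finset E) : Prop :=
  ∃ (n : ℕ) (W : G.Walk n), 0 < n ∧ W.IsClosed ∧ Function.Injective W.x ∧
    (∀ i j : Fin n, W.u i.castSucc = W.u j.castSucc → i = j) ∧ W.support = S

/-- `S` is the edge set of a simple path of positive length from `a` to `b`. -/
def IsPathSet (G : OSG V E) (S : Finset E) (a b : V) : Prop :=
  ∃ (n : ℕ) (W : G.Walk n), 0 < n ∧ W.u 0 = a ∧ W.u (Fin.last n) = b ∧
    Function.Injective W.u ∧ Function.Injective W.x ∧ W.support = S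

/-- The sign of an edge set (product of edge signs). -/
def signSet (G : OSG V E) (S : Finset E) : ℤ := ∏ e ∈ S, G.sign e

/-- The intersection vertices determined by a family of block cycles and block paths:
common vertices of two distinct block cycles, together with endpoints of block paths. -/
def interVertsOf (G : OSG V E) (cycles : Finset (Finset E))
    (paths : Finset (Finset E × V × V)) : Finset V :=
  (cycles.biUnion fun C => cycles.biUnion fun C' =>
      if C = C' then ∅ else G.verts C ∩ G.verts C') ∪
    paths.biUnion fun p => {p.2.1, p.2.2}

/-- A cycle-tree: a connected signed subgraph decomposed into edge-disjoint block
cycles (comprising all its cycles) and vertex-disjoint block paths (each of positive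
length, joining exactly two block cycles precisely at its endpoints), all of whose
intersection vertices are cut-points.  Block cycles may also meet directly in a single
common vertex (a block path of zero length). -/
structure CycleTree (G : OSG V E) where
  edges : Finset E
  cycles : Finset (Finset E)
  paths : Finset (Finset E × V × V)
  conn : G.ConnectedOn edges
  cycles_nonempty : cycles.Nonempty
  cyc_is : ∀ C ∈ cycles, G.IsCycleSet C
  cyc_all : ∀ C ⊆ edges, G.IsCycleSet C → C ∈ cycles
  path_is : ∀ p ∈ paths, G.IsPathSet p.1 p.2.1 p.2.2
  partition : edges = cycles.biUnion id ∪ paths.biUnion (fun p => p.1)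
  cyc_disj : ∀ C ∈ cycles, ∀ C' ∈ cycles, C ≠ C' → Disjoint C C'
  cyc_path_disj : ∀ C ∈ cycles, ∀ p ∈ paths, Disjoint C p.1
  path_vdisj : ∀ p ∈ paths, ∀ q ∈ paths, p ≠ q → Disjoint (G.verts p.1) (G.verts q.1)
  cyc_meet : ∀ C ∈ cycles, ∀ C' ∈ cycles, C ≠ C' → (G.verts C ∩ G.verts C').card ≤ 1
  path_meets : ∀ p ∈ paths, ∃ C1 ∈ cycles, ∃ C2 ∈ cycles, C1 ≠ C2 ∧
    G.verts C1 ∩ G.verts p.1 = {p.2.1} ∧ G.verts C2 ∩ G.verts p.1 = {p.2.2} ∧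
    ∀ C ∈ cycles, C ≠ C1 → C ≠ C2 → G.verts C ∩ G.verts p.1 = ∅
  cuts : ∀ v ∈ G.interVertsOf cycles paths, G.IsCutPoint edges v

namespace CycleTree

variable (T : CycleTree G)

/-- Intersection vertices of a cycle-tree. -/
def interVerts : Finset V := G.interVertsOf T.cycles T.paths

/-- Edges lying on block cycles. -/
def cycleEdges : Finset E := T.cycles.biUnion id

/-- Edges lying on block paths. -/
def pathEdges : Finset E := T.paths.biUnion (fun p => p.1)

/-- The indicator `I_T`: 1 on block-cycle edges, 2 on block-path edges, 0 elsewhere. -/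
def indicator : E → ℤ :=
  fun e => if e ∈ T.cycleEdges then 1 else if e ∈ T.pathEdges then 2 else 0

/-- The indicator `I_T`, valued in `ℕ`. -/
def indicatorNat : E → ℕ :=
  fun e => if e ∈ T.cycleEdges then 1 else if e ∈ T.pathEdges then 2 else 0

/-- The Parity Condition: each balanced block cycle carries an even number of
intersection vertices, each unbalanced block cycle an odd number. -/
def IsEulerian : Prop :=
  ∀ C ∈ T.cycles,
    if G.signSet C = 1 then Even ((G.verts C ∩ T.interVerts).card)
    else Odd ((G.verts C ∩ T.interVerts).card)

end CycleTree

/-- `v` is a sink of the orientation `o` on the subgraph `S`: all incidences at `v`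
have value `-1`. -/
def IsSinkAt (G : OSG V E) (S : Finset E) (o : E → ℤ × ℤ) (v : V) : Prop :=
  v ∈ G.verts S ∧ ∀ e ∈ S,
    ((G.ends e).1 = v → (o e).1 = -1) ∧ ((G.ends e).2 = v → (o e).2 = -1)

/-- `v` is a source of the orientation `o` on the subgraph `S`. -/
def IsSourceAt (G : OSG V E) (S : Finset E) (o : E → ℤ × ℤ) (v : V) : Prop :=
  v ∈ G.verts S ∧ ∀ e ∈ S,
    ((G.ends e).1 = v → (o e).1 = 1) ∧ ((G.ends e).2 = v → (o e).2 = 1)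

/-- A direction of a cycle-tree: an orientation of the subgraph with neither sink nor
source, whose restriction to each block cycle has a sink or a source at each
intersection vertex on that cycle. -/
def CycleTree.IsDirection (T : CycleTree G) (o : E → ℤ × ℤ) : Prop :=
  (∀ e ∈ T.edges, ((o e).1 = 1 ∨ (o e).1 = -1) ∧ (o e).1 * (o e).2 = - G.sign e) ∧
  (∀ v ∈ G.verts T.edges, ¬ G.IsSinkAt T.edges o v ∧ ¬ G.IsSourceAt T.edges o v) ∧
  (∀ C ∈ T.cycles, ∀ v ∈ G.verts C ∩ T.interVerts, G.IsSinkAt C o v ∨ G.IsSourceAt C o v)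

/-- The coupling `[ε, ε_T]` of the ambient orientation with an orientation `o` of the
subgraph `T`. -/
def CycleTree.coupling (T : CycleTree G) (o : E → ℤ × ℤ) : E → ℤ :=
  fun e => if e ∈ T.edges then (G.eps e).1 * (o e).1 else 0

/-- The blocks of a cycle-tree: block cycles and block paths, as edge sets. -/
def CycleTree.blocks (T : CycleTree G) : Finset (Finset E) :=
  T.cycles ∪ T.paths.image (fun p => p.1)

/-- A walk crosses from one block to another at each intersection vertex: consecutive
edges of the walk (cyclically) meeting at an intersection vertex never lie in the same
block. -/
def CycleTree.Crosses (T : CycleTree G) {n : ℕ} (W : G.Walk n) : Prop :=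
  ∀ i : Fin n, W.u i.succ ∈ T.interVerts →
    ∀ B ∈ T.blocks, ¬ (W.x i ∈ B ∧ W.x ⟨(i.val + 1) % n, Nat.mod_lt _ i.pos⟩ ∈ B)

/-- A circuit: an Eulerian cycle-tree containing no proper Eulerian sub-cycle-tree. -/
def IsCircuit (G : OSG V E) (T : CycleTree G) : Prop :=
  T.IsEulerian ∧ ∀ T' : CycleTree G, T'.IsEulerian → T'.edges ⊆ T.edges →
    T'.edges = T.edges

/-- Type I circuit: a single balanced cycle. -/
def CycleTree.TypeI (T : CycleTree G) : Prop :=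
  ∃ C, T.cycles = {C} ∧ T.paths = ∅ ∧ G.signSet C = 1

/-- Type II circuit: two edge-disjoint unbalanced cycles sharing exactly one vertex. -/
def CycleTree.TypeII (T : CycleTree G) : Prop :=
  ∃ C1 C2, C1 ≠ C2 ∧ T.cycles = {C1, C2} ∧ T.paths = ∅ ∧
    G.signSet C1 = -1 ∧ G.signSet C2 = -1 ∧ (G.verts C1 ∩ G.verts C2).card = 1

/-- Type III circuit: two vertex-disjoint unbalanced cycles joined by a simple path of
positive length. -/
def CycleTree.TypeIII (T : CycleTree G) : Prop :=
  ∃ C1 C2 P, C1 ≠ C2 ∧ T.cycles = {C1, C2} ∧ T.paths = {P} ∧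
    G.signSet C1 = -1 ∧ G.signSet C2 = -1 ∧ G.verts C1 ∩ G.verts C2 = ∅

/-- End-block cycles: block cycles carrying exactly one intersection vertex. -/
def CycleTree.endBlocks (T : CycleTree G) : Finset (Finset E) :=
  T.cycles.filter fun C => (G.verts C ∩ T.interVerts).card = 1

/-- Indecomposability of a nontrivial integral flow. -/
def Indecomposable (G : OSG V E) (f : E → ℤ) : Prop :=
  G.IsFlow f ∧ (∃ e, f e ≠ 0) ∧
    ¬ ∃ f1 f2 : E → ℤ, G.IsFlow f1 ∧ G.IsFlow f2 ∧ (∃ e, f1 e ≠ 0) ∧ (∃ e, f2 e ≠ 0) ∧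
        (∀ e, f e = f1 e + f2 e) ∧ (∀ e, 0 ≤ f1 e * f2 e)

/-- The coupling `[ε, ε_f]` for an integral function `f`: `-1` where `f < 0`, else `1`. -/
def couplingF (G : OSG V E) (f : E → ℤ) : E → ℤ := fun e => if f e < 0 then -1 else 1


section Aux
set_option linter.unusedSectionVars false
set_option linter.unusedVariables false

variable {V E : Type} [DecidableEq V] [DecidableEq E] [Fintype E] {G : OSG V E}

lemma Walk.ends_or {n : ℕ} (W : G.Walk n) (i : Fin n) :
    G.ends (W.x i) = (W.u i.castSucc, W.u i.succ) ∨
      G.ends (W.x i) = (W.u i.succ, W.u i.castSucc) := by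
  cases hf : W.fwd i
  · exact Or.inr (W.compat_f i hf)
  · exact Or.inl (W.compat_t i hf)

lemma Walk.mem_support {n : ℕ} (W : G.Walk n) (i : Fin n) : W.x i ∈ W.support := by
  simp [Walk.support]

lemma Walk.adj_step {n : ℕ} (W : G.Walk n) (i : Fin n) :
    G.adjOn W.support (W.u i.castSucc) (W.u i.succ) :=
  ⟨W.x i, W.mem_support i, W.ends_or i⟩

lemma adjOn_symm {S : Finset E} {v w : V} (h : G.adjOn S v w) : G.adjOn S w v := by
  obtain ⟨e, he, h | h⟩ := h
  · exact ⟨e, he, Or.inr h⟩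
  · exact ⟨e, he, Or.inl h⟩

lemma reach_symm {S : Finset E} {v w : V} (h : G.Reach S v w) : G.Reach S w v := by
  induction h with
  | refl => exact Relation.ReflTransGen.refl
  | tail _ hadj ih => exact Relation.ReflTransGen.head (G.adjOn_symm hadj) ih

lemma adjOn_mono {S S' : Finset E} (hSS : S ⊆ S') {v w : V} (h : G.adjOn S v w) :
    G.adjOn S' v w := by
  obtain ⟨e, he, h⟩ := h; exact ⟨e, hSS he, h⟩

lemma reach_mono {S S' : Finset E} (hSS : S ⊆ S') {v w : V} (h : G.Reach S v w) :
    G.Reach S' v w :=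
  Relation.ReflTransGen.mono (fun _ _ hh => G.adjOn_mono hSS hh) _ _ h

lemma mem_verts_iff {S : Finset E} {a : V} :
    a ∈ G.verts S ↔ ∃ e ∈ S, (G.ends e).1 = a ∨ (G.ends e).2 = a := by
  simp only [verts, Finset.mem_union, Finset.mem_image]
  constructor
  · rintro (⟨e, he, h⟩ | ⟨e, he, h⟩)
    · exact ⟨e, he, Or.inl h⟩
    · exact ⟨e, he, Or.inr h⟩
  · rintro ⟨e, he, h | h⟩
    · exact Or.inl ⟨e, he, h⟩
    · exact Or.inr ⟨e, he, h⟩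

lemma adjOn_mem_verts {S : Finset E} {v w : V} (h : G.adjOn S v w) :
    v ∈ G.verts S ∧ w ∈ G.verts S := by
  obtain ⟨e, he, h | h⟩ := h <;>
    constructor <;> rw [mem_verts_iff] <;> exact ⟨e, he, by rw [h] <;> simp [h]⟩

lemma verts_mono {S S' : Finset E} (h : S ⊆ S') : G.verts S ⊆ G.verts S' :=
  Finset.union_subset_union (Finset.image_subset_image h) (Finset.image_subset_image h)

lemma verts_union (S S' : Finset E) : G.verts (S ∪ S') = G.verts S ∪ G.verts S' := by
  ext a; simp only [mem_verts_iff, Finset.mem_union]; constructor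
  · rintro ⟨e, he | he, h⟩
    · exact Or.inl ⟨e, he, h⟩
    · exact Or.inr ⟨e, he, h⟩
  · rintro (⟨e, he, h⟩ | ⟨e, he, h⟩)
    · exact ⟨e, Or.inl he, h⟩
    · exact ⟨e, Or.inr he, h⟩

lemma Walk.u_mem_verts {n : ℕ} (W : G.Walk n) (j : Fin (n + 1)) (hn : 0 < n) :
    W.u j ∈ G.verts W.support := by
  rw [mem_verts_iff]
  rcases lt_or_eq_of_le (Nat.lt_succ_iff.mp j.isLt) with hj | hj
  · refine ⟨W.x ⟨j.val, hj⟩, W.mem_support _, ?_⟩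
    have : (⟨j.val, hj⟩ : Fin n).castSucc = j := by ext; simp
    rcases W.ends_or ⟨j.val, hj⟩ with h | h <;> rw [h, this] <;> simp
  · refine ⟨W.x ⟨n - 1, by omega⟩, W.mem_support _, ?_⟩
    have : (⟨n - 1, by omega⟩ : Fin n).succ = j := by ext; simp; omega
    rcases W.ends_or ⟨n - 1, by omega⟩ with h | h <;> rw [h]
    · exact Or.inr (congrArg W.u this)
    · exact Or.inl (congrArg W.u this)

lemma Walk.verts_exists {n : ℕ} (W : G.Walk n) {a : V} (ha : a ∈ G.verts W.support) :
    ∃ j : Fin (n + 1), a = W.u j := by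
  rw [mem_verts_iff] at ha
  obtain ⟨e, he, h⟩ := ha
  simp only [Walk.support, Finset.mem_image, Finset.mem_univ, true_and] at he
  obtain ⟨i, rfl⟩ := he
  rcases W.ends_or i with h2 | h2 <;> rw [h2] at h <;> rcases h with h | h <;>
    exact ⟨_, h.symm⟩

lemma Walk.reach_u {n : ℕ} (W : G.Walk n) (j k : Fin (n + 1)) :
    G.Reach W.support (W.u j) (W.u k) := by
  suffices H : ∀ m : ℕ, ∀ hm : m < n + 1, G.Reach W.support (W.u 0) (W.u ⟨m, hm⟩) by
    have h1 := H j.val j.isLt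
    have h2 := H k.val k.isLt
    have : (⟨j.val, j.isLt⟩ : Fin (n+1)) = j := rfl
    exact Relation.ReflTransGen.trans (G.reach_symm (by simpa using h1)) (by simpa [Reach] using h2)
  intro m
  induction m with
  | zero => intro _; exact Relation.ReflTransGen.refl
  | succ m ih =>
    intro hm
    have h1 := ih (by omega)
    refine Relation.ReflTransGen.tail h1 ?_
    have := W.adj_step ⟨m, by omega⟩
    have e1 : (⟨m, by omega⟩ : Fin n).castSucc = (⟨m, by omega⟩ : Fin (n+1)) := rfl
    have e2 : (⟨m, by omega⟩ : Fin n).succ = (⟨m + 1, hm⟩ : Fin (n+1)) := rfl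
    rwa [e1, e2] at this

lemma Walk.connectedOn {n : ℕ} (W : G.Walk n) : G.ConnectedOn W.support := by
  intro v hv w hw
  obtain ⟨j, rfl⟩ := W.verts_exists hv
  obtain ⟨k, rfl⟩ := W.verts_exists hw
  exact W.reach_u j k

lemma connectedOn_union {S S' : Finset E} {c : V} (hS : G.ConnectedOn S)
    (hS' : G.ConnectedOn S') (hc : c ∈ G.verts S) (hc' : c ∈ G.verts S') :
    G.ConnectedOn (S ∪ S') := by
  have key : ∀ v ∈ G.verts (S ∪ S'), G.Reach (S ∪ S') v c := by
    intro v hv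
    rw [verts_union, Finset.mem_union] at hv
    rcases hv with hv | hv
    · exact G.reach_mono Finset.subset_union_left (hS v hv c hc)
    · exact G.reach_mono Finset.subset_union_right (hS' v hv c hc')
  intro v hv w hw
  exact Relation.ReflTransGen.trans (key v hv) (G.reach_symm (key w hw))


/-- The relation of adjacency avoiding a vertex `a`. -/
abbrev avoidRel (G : OSG V E) (S : Finset E) (a : V) : V → V → Prop :=
  fun p q => p ≠ a ∧ q ≠ a ∧ G.adjOn S p q

lemma avoidRel_symm {S : Finset E} {a : V} {v w : V} (h : G.avoidRel S a v w) :
    G.avoidRel S a w v := ⟨h.2.1, h.1, G.adjOn_symm h.2.2⟩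

lemma avoidReach_symm {S : Finset E} {a : V} {v w : V}
    (h : Relation.ReflTransGen (G.avoidRel S a) v w) :
    Relation.ReflTransGen (G.avoidRel S a) w v := by
  induction h with
  | refl => exact Relation.ReflTransGen.refl
  | tail _ hstep ih => exact Relation.ReflTransGen.head (G.avoidRel_symm hstep) ih

lemma avoidReach_mono {S S' : Finset E} (hSS : S ⊆ S') {a : V} {v w : V}
    (h : Relation.ReflTransGen (G.avoidRel S a) v w) :
    Relation.ReflTransGen (G.avoidRel S' a) v w :=
  Relation.ReflTransGen.mono (r := G.avoidRel S a) (p := G.avoidRel S' a)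
    (fun _ _ hh => ⟨hh.1, hh.2.1, G.adjOn_mono hSS hh.2.2⟩) _ _ h

/-- Invariant lemma: a predicate closed under avoiding-`a` steps persists. -/
lemma avoid_stays {S : Finset E} {a : V} {K : V → Prop}
    (hK : ∀ v w, K v → w ≠ a → G.adjOn S v w → K w) {x y : V}
    (h : Relation.ReflTransGen (G.avoidRel S a) x y) (hx : K x) : K y := by
  induction h with
  | refl => exact hx
  | tail _ hstep ih => exact hK _ _ ih hstep.2.1 hstep.2.2

/-- Splice lemma: if any two neighbours of `a` are joined avoiding `a`, then
walks through `a` can be rerouted. -/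
lemma splice_aux {S : Finset E} {a : V}
    (H1 : ∀ z w, z ≠ a → w ≠ a → G.adjOn S z a → G.adjOn S a w →
      Relation.ReflTransGen (G.avoidRel S a) z w)
    {y : V} (hy : y ≠ a) {x : V} (h : G.Reach S x y) :
    (x ≠ a → Relation.ReflTransGen (G.avoidRel S a) x y) ∧
    (x = a → ∀ z, z ≠ a → G.adjOn S z a → Relation.ReflTransGen (G.avoidRel S a) z y) := by
  induction h using Relation.ReflTransGen.head_induction_on with
  | refl =>
    refine ⟨fun _ => Relation.ReflTransGen.refl, fun hxa => absurd hxa hy⟩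
  | head hstep rest ih =>
    rename_i x c
    by_cases hc : c = a
    · subst hc
      constructor
      · intro hx
        exact ih.2 rfl x hx hstep
      · intro hx z hz hzadj
        exact ih.2 rfl z hz hzadj
    · constructor
      · intro hx
        exact Relation.ReflTransGen.head ⟨hx, hc, hstep⟩ (ih.1 hc)
      · intro hx z hz hzadj
        subst hx
        exact Relation.ReflTransGen.trans (H1 z c hz hc hzadj hstep) (ih.1 hc)

lemma not_cutPoint_of_splice {S : Finset E} {a : V}
    (H1 : ∀ z w, z ≠ a → w ≠ a → G.adjOn S z a → G.adjOn S a w →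
      Relation.ReflTransGen (G.avoidRel S a) z w) :
    ¬ G.IsCutPoint S a := by
  rintro ⟨x, hx, y, hy, hxa, hya, hr, hn⟩
  exact hn ((G.splice_aux H1 hya hr).1 hxa)

lemma sign_unit (e : E) : G.sign e = 1 ∨ G.sign e = -1 := by
  rcases G.eps1 e with h1 | h1 <;> rcases G.eps2 e with h2 | h2 <;>
    simp [sign, h1, h2]

lemma signSet_unit (S : Finset E) : G.signSet S = 1 ∨ G.signSet S = -1 := by
  unfold signSet
  refine Finset.prod_induction _ (fun x => x = 1 ∨ x = -1) ?_ (Or.inl rfl) ?_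
  · rintro a b (rfl | rfl) (rfl | rfl) <;> norm_num
  · intro e _; exact G.sign_unit e

lemma IsCycleSet.nonempty {C : Finset E} (h : G.IsCycleSet C) : C.Nonempty := by
  obtain ⟨n, W, hn, _, _, _, rfl⟩ := h
  exact ⟨W.x ⟨0, hn⟩, W.mem_support _⟩

lemma IsCycleSet.verts_nonempty {C : Finset E} (h : G.IsCycleSet C) :
    (G.verts C).Nonempty := by
  obtain ⟨e, he⟩ := h.nonempty
  exact ⟨(G.ends e).1, mem_verts_iff.mpr ⟨e, he, Or.inl rfl⟩⟩

lemma IsCycleSet.connectedOn {C : Finset E} (h : G.IsCycleSet C) : G.ConnectedOn C := by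
  obtain ⟨n, W, hn, _, _, _, rfl⟩ := h
  exact W.connectedOn

lemma IsPathSet.nonempty {P : Finset E} {a b : V} (h : G.IsPathSet P a b) : P.Nonempty := by
  obtain ⟨n, W, hn, _, _, _, _, rfl⟩ := h
  exact ⟨W.x ⟨0, hn⟩, W.mem_support _⟩

lemma IsPathSet.connectedOn {P : Finset E} {a b : V} (h : G.IsPathSet P a b) :
    G.ConnectedOn P := by
  obtain ⟨n, W, hn, _, _, _, _, rfl⟩ := h
  exact W.connectedOn

lemma IsPathSet.ends_ne {P : Finset E} {a b : V} (h : G.IsPathSet P a b) : a ≠ b := by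
  obtain ⟨n, W, hn, ha, hb, hu, _, _⟩ := h
  rw [← ha, ← hb]
  intro hab
  have := hu hab
  have : (0 : Fin (n+1)).val = (Fin.last n).val := by rw [this]
  simp [Fin.last] at this
  omega

lemma IsPathSet.left_mem {P : Finset E} {a b : V} (h : G.IsPathSet P a b) :
    a ∈ G.verts P := by
  obtain ⟨n, W, hn, ha, hb, hu, _, rfl⟩ := h
  rw [← ha]; exact W.u_mem_verts 0 hn

lemma IsPathSet.right_mem {P : Finset E} {a b : V} (h : G.IsPathSet P a b) :
    b ∈ G.verts P := by
  obtain ⟨n, W, hn, ha, hb, hu, _, rfl⟩ := h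
  rw [← hb]; exact W.u_mem_verts _ hn

/-- The unique way edges of a simple path touch its left endpoint. -/
lemma IsPathSet.end_edge {P : Finset E} {a b : V} (h : G.IsPathSet P a b) :
    ∃ w, w ≠ a ∧ ∀ e ∈ P, ((G.ends e).1 = a ∨ (G.ends e).2 = a) →
      (G.ends e = (a, w) ∨ G.ends e = (w, a)) := by
  obtain ⟨n, W, hn, ha, hb, hu, hx, rfl⟩ := h
  refine ⟨W.u ⟨1, by omega⟩, ?_, ?_⟩
  · intro hw
    rw [← ha] at hw
    have := hu hw
    have : (1 : ℕ) = (0 : Fin (n+1)).val := congrArg Fin.val this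
    simp at this
  · intro e he hend
    simp only [Walk.support, Finset.mem_image, Finset.mem_univ, true_and] at he
    obtain ⟨i, rfl⟩ := he
    have hi0 : i = ⟨0, hn⟩ := by
      have key : W.u i.castSucc = a ∨ W.u i.succ = a := by
        rcases W.ends_or i with hor | hor <;> rw [hor] at hend <;> tauto
      rcases key with hca | hca
      · rw [← ha] at hca
        have h2 := hu hca.symm
        ext
        have := congrArg Fin.val h2
        simp [Fin.coe_castSucc] at this
        simp [← this]
      · exfalso
        rw [← ha] at hca
        have h2 := congrArg Fin.val (hu hca.symm)
        simp [Fin.val_succ] at h2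
    subst hi0
    have h1 : (⟨0, hn⟩ : Fin n).castSucc = (0 : Fin (n+1)) := rfl
    have h2 : (⟨0, hn⟩ : Fin n).succ = (⟨1, by omega⟩ : Fin (n+1)) := rfl
    rcases W.ends_or ⟨0, hn⟩ with hor | hor <;> rw [hor, h1, h2, ha]
    · exact Or.inl rfl
    · exact Or.inr rfl


lemma nat_mod_cancel {n k d : ℕ} (hn : 0 < n) (h : (k + d) % n = k % n) : n ∣ d := by
  have h1 : k + d ≡ k + 0 [MOD n] := by rw [add_zero]; exact h
  have h2 : d ≡ 0 [MOD n] := Nat.ModEq.add_left_cancel' k h1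
  exact (Nat.modEq_zero_iff_dvd).mp h2

/-- Cyclic vertex indexing of a walk. -/
def Walk.vv {n : ℕ} (W : G.Walk n) (hn : 0 < n) (m : ℕ) : V :=
  W.u (Fin.castSucc ⟨m % n, Nat.mod_lt m hn⟩)

lemma Walk.vv_succ {n : ℕ} (W : G.Walk n) (hn : 0 < n) (hcl : W.IsClosed) (m : ℕ) :
    W.vv hn (m + 1) = W.u (Fin.succ ⟨m % n, Nat.mod_lt m hn⟩) := by
  have hm := Nat.mod_lt m hn
  by_cases h : m % n + 1 < n
  · have h1 : (1 : ℕ) % n = 1 := Nat.mod_eq_of_lt (by omega)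
    have hmod : (m + 1) % n = m % n + 1 := by
      rw [Nat.add_mod, h1, Nat.mod_eq_of_lt h]
    unfold Walk.vv
    congr 1
    ext
    simp [hmod]
  · have hmn : m % n + 1 = n := by omega
    have hdvd : n ∣ m + 1 := by
      have h3 := Nat.mod_add_div m n
      exact ⟨m / n + 1, by rw [Nat.mul_add, Nat.mul_one]; omega⟩
    have hmod : (m + 1) % n = 0 := Nat.mod_eq_zero_of_dvd hdvd
    have hsucc : (Fin.succ ⟨m % n, Nat.mod_lt m hn⟩ : Fin (n + 1)) = Fin.last n := by
      ext; simp [Fin.last, hmn]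
    rw [hsucc, ← hcl]
    unfold Walk.vv
    congr 1
    ext
    simp [hmod]

lemma Walk.vv_adj {n : ℕ} (W : G.Walk n) (hn : 0 < n) (hcl : W.IsClosed) (m : ℕ) :
    G.adjOn W.support (W.vv hn m) (W.vv hn (m + 1)) := by
  rw [W.vv_succ hn hcl]
  exact W.adj_step ⟨m % n, Nat.mod_lt m hn⟩

lemma Walk.vv_inj {n : ℕ} (W : G.Walk n) (hn : 0 < n)
    (hui : ∀ i j : Fin n, W.u i.castSucc = W.u j.castSucc → i = j) {m m' : ℕ}
    (h : W.vv hn m = W.vv hn m') : m % n = m' % n := by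
  have := hui _ _ h
  exact congrArg Fin.val this

lemma Walk.vv_castSucc {n : ℕ} (W : G.Walk n) (hn : 0 < n) (i : Fin n) :
    W.u i.castSucc = W.vv hn i.val := by
  unfold Walk.vv
  congr 1
  ext
  simp [Nat.mod_eq_of_lt i.isLt]

lemma Walk.vv_succ' {n : ℕ} (W : G.Walk n) (hn : 0 < n) (hcl : W.IsClosed) (i : Fin n) :
    W.u i.succ = W.vv hn (i.val + 1) := by
  rw [W.vv_succ hn hcl]
  congr 1
  ext
  simp [Nat.mod_eq_of_lt i.isLt]

lemma Walk.vv_congr {n : ℕ} (W : G.Walk n) (hn : 0 < n) {m m' : ℕ}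
    (h : m % n = m' % n) : W.vv hn m = W.vv hn m' := by
  unfold Walk.vv
  exact congrArg (fun t : Fin n => W.u t.castSucc) (by ext; exact h)

/-- The two neighbours of a vertex on a cycle, with the arc joining them
avoiding the vertex. -/
lemma cycle_neighbors {C : Finset E} (hC : G.IsCycleSet C) {a : V} (ha : a ∈ G.verts C)
    (hnl : ∃ v ∈ G.verts C, v ≠ a) :
    ∃ α β : V, α ≠ a ∧ β ≠ a ∧
      Relation.ReflTransGen (G.avoidRel C a) α β ∧
      Relation.ReflTransGen (G.avoidRel C a) β α ∧
      (∀ z, z ≠ a → G.adjOn C z a → (z = α ∨ z = β)) := by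
  obtain ⟨n, W, hn, hcl, hx, hui, rfl⟩ := hC
  have hn2 : 2 ≤ n := by
    by_contra hcon
    obtain ⟨v, hv, hva⟩ := hnl
    obtain ⟨j, rfl⟩ := W.verts_exists hv
    obtain ⟨j', haj⟩ := W.verts_exists ha
    have hn1 : n = 1 := by omega
    subst hn1
    have hall : ∀ j : Fin 2, W.u j = W.u 0 := by
      intro j
      have : j = 0 ∨ j = 1 := by omega
      rcases this with rfl | rfl
      · rfl
      · exact (hcl.symm : W.u (Fin.last 1) = W.u 0)
    exact hva (by rw [hall j, haj, hall j'])
  obtain ⟨j, haj⟩ := W.verts_exists ha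
  have hk : ∃ k : ℕ, k < n ∧ a = W.vv hn k := by
    rcases lt_or_eq_of_le (Nat.lt_succ_iff.mp j.isLt) with hj | hj
    · refine ⟨j.val, hj, ?_⟩
      rw [haj]
      have hjc : j = Fin.castSucc ⟨j.val, hj⟩ := by ext; simp
      conv_lhs => rw [hjc]
      exact W.vv_castSucc hn ⟨j.val, hj⟩
    · refine ⟨0, by omega, ?_⟩
      rw [haj]
      have hjl : j = Fin.last n := by ext; simp [hj]
      rw [hjl, ← hcl]
      have : (0 : Fin (n + 1)) = Fin.castSucc ⟨0, by omega⟩ := rfl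
      rw [this, W.vv_castSucc hn ⟨0, by omega⟩]
  obtain ⟨k, hkn, hak⟩ := hk
  have hvvne : ∀ d : ℕ, ¬ (n ∣ d) → W.vv hn (k + d) ≠ a := by
    intro d hd hcon
    rw [hak] at hcon
    exact hd (nat_mod_cancel hn (W.vv_inj hn hui hcon))
  have hnd1 : ¬ (n ∣ 1) := by intro hdd; have := Nat.le_of_dvd (by omega) hdd; omega
  have hndn1 : ¬ (n ∣ (n - 1)) := by
    intro hdd
    rcases Nat.eq_zero_of_dvd_of_lt hdd (by omega) with h
    omega
  have hforward : Relation.ReflTransGen (G.avoidRel W.support a)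
      (W.vv hn (k + 1)) (W.vv hn (k + (n - 1))) := by
    have harc : ∀ m : ℕ, m ≤ n - 2 →
        Relation.ReflTransGen (G.avoidRel W.support a) (W.vv hn (k + 1)) (W.vv hn (k + 1 + m)) := by
      intro m
      induction m with
      | zero => intro _; exact Relation.ReflTransGen.refl
      | succ m ih =>
        intro hm
        refine Relation.ReflTransGen.tail (ih (by omega)) ?_
        have e1 : k + 1 + m = k + (1 + m) := by omega
        have e2 : k + 1 + (m + 1) = k + (1 + m + 1) := by omega
        have hne1 : W.vv hn (k + (1 + m)) ≠ a := by
          apply hvvne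
          intro hdd
          have := Nat.le_of_dvd (by omega) hdd
          omega
        have hne2 : W.vv hn (k + (1 + m + 1)) ≠ a := by
          apply hvvne
          intro hdd
          have := Nat.le_of_dvd (by omega) hdd
          omega
        rw [e1, e2]
        refine ⟨hne1, hne2, ?_⟩
        have := W.vv_adj hn hcl (k + (1 + m))
        have e3 : k + (1 + m) + 1 = k + (1 + m + 1) := by omega
        rwa [e3] at this
    have := harc (n - 2) (le_refl _)
    have e4 : k + 1 + (n - 2) = k + (n - 1) := by omega
    rwa [e4] at this
  refine ⟨W.vv hn (k + 1), W.vv hn (k + (n - 1)), hvvne 1 hnd1, hvvne (n - 1) hndn1,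
    hforward, G.avoidReach_symm hforward, ?_⟩
  intro z hz hadj
  obtain ⟨e, he, hor⟩ := hadj
  simp only [Walk.support, Finset.mem_image, Finset.mem_univ, true_and] at he
  obtain ⟨i, rfl⟩ := he
  have h1 : W.u i.castSucc = W.vv hn i.val := W.vv_castSucc hn i
  have h2 : W.u i.succ = W.vv hn (i.val + 1) := W.vv_succ' hn hcl i
  have key : (z = W.vv hn i.val ∧ a = W.vv hn (i.val + 1)) ∨
             (a = W.vv hn i.val ∧ z = W.vv hn (i.val + 1)) := by
    rcases W.ends_or i with h3 | h3 <;> rw [h3] at hor <;>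
      rcases hor with h4 | h4 <;> simp [Prod.ext_iff] at h4 <;>
      first
      | exact Or.inl ⟨h4.1.symm.trans h1, h4.2.symm.trans h2⟩
      | exact Or.inr ⟨h4.1.symm.trans h1, h4.2.symm.trans h2⟩
      | exact Or.inl ⟨h4.2.symm.trans h1, h4.1.symm.trans h2⟩
      | exact Or.inr ⟨h4.2.symm.trans h1, h4.1.symm.trans h2⟩
  rcases key with ⟨hzv, hav⟩ | ⟨hav, hzv⟩
  · -- a = vv (i+1) : z is the predecessor, equals vv (k + (n-1))
    right
    rw [hzv]
    apply W.vv_congr hn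
    have hki : (i.val + 1) % n = k := by
      have := W.vv_inj hn hui (hav.symm.trans hak).symm
      rw [Nat.mod_eq_of_lt hkn] at this
      exact this.symm
    by_cases hin : i.val + 1 < n
    · have hk2 : i.val + 1 = k := by rwa [Nat.mod_eq_of_lt hin] at hki
      have e5 : k + (n - 1) = i.val + n := by omega
      rw [e5, Nat.add_mod_right, Nat.mod_eq_of_lt i.isLt]
    · have hin2 : i.val + 1 = n := by have := i.isLt; omega
      have hk0 : k = 0 := by rw [hin2, Nat.mod_self] at hki; omega
      have e5 : k + (n - 1) = n - 1 := by omega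
      rw [e5, Nat.mod_eq_of_lt i.isLt, Nat.mod_eq_of_lt (show n - 1 < n by omega)]
      omega
  · -- a = vv i : z is the successor, equals vv (k + 1)
    left
    rw [hzv]
    apply W.vv_congr hn
    have hki : i.val % n = k := by
      have := W.vv_inj hn hui (hav.symm.trans hak).symm
      rw [Nat.mod_eq_of_lt hkn] at this
      exact this.symm
    have hik : i.val = k := by rwa [Nat.mod_eq_of_lt i.isLt] at hki
    rw [hik]


/-- The unique way edges of a simple path touch its right endpoint. -/
lemma IsPathSet.end_edge_right {P : Finset E} {a b : V} (h : G.IsPathSet P a b) :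
    ∃ w, w ≠ b ∧ ∀ e ∈ P, ((G.ends e).1 = b ∨ (G.ends e).2 = b) →
      (G.ends e = (b, w) ∨ G.ends e = (w, b)) := by
  obtain ⟨n, W, hn, ha, hb, hu, hx, rfl⟩ := h
  refine ⟨W.u (Fin.castSucc ⟨n - 1, by omega⟩), ?_, ?_⟩
  · intro hw
    rw [← hb] at hw
    have h2 := congrArg Fin.val (hu hw)
    simp [Fin.last] at h2
    omega
  · intro e he hend
    simp only [Walk.support, Finset.mem_image, Finset.mem_univ, true_and] at he
    obtain ⟨i, rfl⟩ := he
    have hi0 : i = ⟨n - 1, by omega⟩ := by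
      have key : W.u i.castSucc = b ∨ W.u i.succ = b := by
        rcases W.ends_or i with hor | hor <;> rw [hor] at hend <;> tauto
      rcases key with hca | hca
      · exfalso
        rw [← hb] at hca
        have h2 := congrArg Fin.val (hu hca)
        have := i.isLt
        simp [Fin.last] at h2
        omega
      · rw [← hb] at hca
        have h2 := congrArg Fin.val (hu hca)
        simp [Fin.last, Fin.val_succ] at h2
        apply Fin.ext
        show (i : ℕ) = n - 1
        omega
    subst hi0
    have h2 : (⟨n - 1, by omega⟩ : Fin n).succ = Fin.last n := by
      ext; simp [Fin.last]; omega
    rcases W.ends_or ⟨n - 1, by omega⟩ with hor | hor <;> rw [hor, h2, hb]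
    · exact Or.inr rfl
    · exact Or.inl rfl

namespace CycleTree

variable (T : CycleTree G)

lemma cyc_subset {C : Finset E} (hC : C ∈ T.cycles) : C ⊆ T.edges := by
  rw [T.partition]
  intro e he
  exact Finset.mem_union_left _ (Finset.mem_biUnion.mpr ⟨C, hC, he⟩)

lemma path_subset {p : Finset E × V × V} (hp : p ∈ T.paths) : p.1 ⊆ T.edges := by
  rw [T.partition]
  intro e he
  exact Finset.mem_union_right _ (Finset.mem_biUnion.mpr ⟨p, hp, he⟩)

lemma edge_in_block {e : E} (he : e ∈ T.edges) :
    (∃ C ∈ T.cycles, e ∈ C) ∨ ∃ p ∈ T.paths, e ∈ p.1 := by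
  rw [T.partition] at he
  rcases Finset.mem_union.mp he with h | h
  · exact Or.inl (by simpa using Finset.mem_biUnion.mp h)
  · exact Or.inr (Finset.mem_biUnion.mp h)

end CycleTree

lemma mem_interVertsOf_iff {cs : Finset (Finset E)} {ps : Finset (Finset E × V × V)} {v : V} :
    v ∈ G.interVertsOf cs ps ↔
      (∃ C ∈ cs, ∃ C' ∈ cs, C ≠ C' ∧ v ∈ G.verts C ∧ v ∈ G.verts C') ∨
      (∃ p ∈ ps, v = p.2.1 ∨ v = p.2.2) := by
  unfold interVertsOf
  rw [Finset.mem_union]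
  constructor
  · rintro (h | h)
    · obtain ⟨C, hC, h⟩ := Finset.mem_biUnion.mp h
      obtain ⟨C', hC', h⟩ := Finset.mem_biUnion.mp h
      by_cases hcc : C = C'
      · simp [hcc] at h
      · rw [if_neg hcc, Finset.mem_inter] at h
        exact Or.inl ⟨C, hC, C', hC', hcc, h.1, h.2⟩
    · obtain ⟨p, hp, h⟩ := Finset.mem_biUnion.mp h
      simp only [Finset.mem_insert, Finset.mem_singleton] at h
      exact Or.inr ⟨p, hp, h⟩
  · rintro (⟨C, hC, C', hC', hcc, hm1, hm2⟩ | ⟨p, hp, h⟩)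
    · refine Or.inl (Finset.mem_biUnion.mpr ⟨C, hC, Finset.mem_biUnion.mpr ⟨C', hC', ?_⟩⟩)
      rw [if_neg hcc, Finset.mem_inter]
      exact ⟨hm1, hm2⟩
    · refine Or.inr (Finset.mem_biUnion.mpr ⟨p, hp, ?_⟩)
      simp only [Finset.mem_insert, Finset.mem_singleton]
      exact h

/-- In a path-free cycle-tree with two distinct cycles, some two cycles share a vertex. -/
lemma CycleTree.exists_shared (T : CycleTree G) (hpe : T.paths = ∅) {C C' : Finset E}
    (hC : C ∈ T.cycles) (hC' : C' ∈ T.cycles) (hne : C ≠ C') :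
    ∃ D ∈ T.cycles, ∃ D' ∈ T.cycles, D ≠ D' ∧ ∃ a, a ∈ G.verts D ∧ a ∈ G.verts D' := by
  obtain ⟨v, hv⟩ := (T.cyc_is C hC).verts_nonempty
  obtain ⟨w, hw⟩ := (T.cyc_is C' hC').verts_nonempty
  have hv' : v ∈ G.verts T.edges := G.verts_mono (T.cyc_subset hC) hv
  have hw' : w ∈ G.verts T.edges := G.verts_mono (T.cyc_subset hC') hw
  have hr := T.conn v hv' w hw'
  have key : ∀ z, G.Reach T.edges v z →
      (∃ D ∈ T.cycles, ∃ D' ∈ T.cycles, D ≠ D' ∧ ∃ a, a ∈ G.verts D ∧ a ∈ G.verts D') ∨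
        z ∈ G.verts C := by
    intro z hz
    induction hz with
    | refl => exact Or.inr hv
    | @tail zmid znew hab hstep ih =>
      rcases ih with hdone | hmem
      · exact Or.inl hdone
      · obtain ⟨e, he, hor⟩ := hstep
        rcases T.edge_in_block he with ⟨D, hD, heD⟩ | ⟨p, hp2, _⟩
        · have hmemD := G.adjOn_mem_verts (S := D) ⟨e, heD, hor⟩
          by_cases hCD : C = D
          · exact Or.inr (hCD ▸ hmemD.2)
          · exact Or.inl ⟨C, hC, D, hD, hCD, zmid, hmem, hmemD.1⟩
        · rw [hpe] at hp2; simp at hp2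
  rcases key w hr with hdone | hmem
  · exact hdone
  · exact ⟨C, hC, C', hC', hne, w, hmem, hw⟩

/-- A cycle designated by a path is not a loop at the path's endpoint. -/
lemma CycleTree.path_end_nonloop (T : CycleTree G) {p : Finset E × V × V} (hp : p ∈ T.paths)
    {C1 C2 : Finset E} (h1 : C1 ∈ T.cycles) (h2 : C2 ∈ T.cycles) (hne12 : C1 ≠ C2)
    (hm1 : G.verts C1 ∩ G.verts p.1 = {p.2.1}) (hm2 : G.verts C2 ∩ G.verts p.1 = {p.2.2})
    (hother : ∀ C ∈ T.cycles, C ≠ C1 → C ≠ C2 → G.verts C ∩ G.verts p.1 = ∅) :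
    ∃ v ∈ G.verts C1, v ≠ p.2.1 := by
  by_contra hcon
  push_neg at hcon
  have hpis := T.path_is p hp
  have hab := hpis.ends_ne
  have haP : p.2.1 ∈ G.verts p.1 := hpis.left_mem
  have hmemI : p.2.1 ∈ T.interVerts :=
    mem_interVertsOf_iff.mpr (Or.inr ⟨p, hp, Or.inl rfl⟩)
  have hcut := T.cuts p.2.1 hmemI
  obtain ⟨w, hwa, hwspec⟩ := hpis.end_edge
  have hclass : ∀ z, z ≠ p.2.1 → G.adjOn T.edges z p.2.1 → z = w := by
    intro z hz hadj
    obtain ⟨e, he, hor⟩ := hadj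
    have hza : z ∈ G.verts T.edges ∧ p.2.1 ∈ G.verts T.edges := by
      constructor <;> rw [mem_verts_iff]
      · exact ⟨e, he, by rcases hor with h | h <;> rw [h] <;> simp⟩
      · exact ⟨e, he, by rcases hor with h | h <;> rw [h] <;> simp⟩
    rcases T.edge_in_block he with ⟨D, hD, heD⟩ | ⟨q, hq, heq⟩
    · exfalso
      have hDmem := G.adjOn_mem_verts (S := D) ⟨e, heD, hor⟩
      by_cases hD1 : D = C1
      · exact hz (hcon z (hD1 ▸ hDmem.1))
      by_cases hD2 : D = C2
      · have : p.2.1 ∈ G.verts C2 ∩ G.verts p.1 := Finset.mem_inter.mpr ⟨hD2 ▸ hDmem.2, haP⟩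
        rw [hm2, Finset.mem_singleton] at this
        exact hab this
      · have := hother D hD hD1 hD2
        have hmm : p.2.1 ∈ G.verts D ∩ G.verts p.1 := Finset.mem_inter.mpr ⟨hDmem.2, haP⟩
        rw [this] at hmm
        simp at hmm
    · have hqp : q = p := by
        by_contra hqp
        have hdisj := T.path_vdisj q hq p hp hqp
        have hqmem := G.adjOn_mem_verts (S := q.1) ⟨e, heq, hor⟩
        exact (Finset.disjoint_left.mp hdisj) hqmem.2 haP
      subst hqp
      have := hwspec e heq (by rcases hor with h | h <;> rw [h] <;> simp)
      rcases hor with h | h <;> rcases this with h' | h' <;> rw [h] at h' <;>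
        simp [Prod.ext_iff] at h' <;> tauto
  apply G.not_cutPoint_of_splice (S := T.edges) (a := p.2.1) ?_ hcut
  intro z zz hz hzz hadj hadj2
  rw [hclass z hz hadj, hclass zz hzz (G.adjOn_symm hadj2)]

/-- Symmetric version for the right endpoint. -/
lemma CycleTree.path_end_nonloop_right (T : CycleTree G) {p : Finset E × V × V} (hp : p ∈ T.paths)
    {C1 C2 : Finset E} (h1 : C1 ∈ T.cycles) (h2 : C2 ∈ T.cycles) (hne12 : C1 ≠ C2)
    (hm1 : G.verts C1 ∩ G.verts p.1 = {p.2.1}) (hm2 : G.verts C2 ∩ G.verts p.1 = {p.2.2})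
    (hother : ∀ C ∈ T.cycles, C ≠ C1 → C ≠ C2 → G.verts C ∩ G.verts p.1 = ∅) :
    ∃ v ∈ G.verts C2, v ≠ p.2.2 := by
  by_contra hcon
  push_neg at hcon
  have hpis := T.path_is p hp
  have hab := hpis.ends_ne
  have hbP : p.2.2 ∈ G.verts p.1 := hpis.right_mem
  have hmemI : p.2.2 ∈ T.interVerts :=
    mem_interVertsOf_iff.mpr (Or.inr ⟨p, hp, Or.inr rfl⟩)
  have hcut := T.cuts p.2.2 hmemI
  obtain ⟨w, hwa, hwspec⟩ := hpis.end_edge_right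
  have hclass : ∀ z, z ≠ p.2.2 → G.adjOn T.edges z p.2.2 → z = w := by
    intro z hz hadj
    obtain ⟨e, he, hor⟩ := hadj
    rcases T.edge_in_block he with ⟨D, hD, heD⟩ | ⟨q, hq, heq⟩
    · exfalso
      have hDmem := G.adjOn_mem_verts (S := D) ⟨e, heD, hor⟩
      by_cases hD2 : D = C2
      · exact hz (hcon z (hD2 ▸ hDmem.1))
      by_cases hD1 : D = C1
      · have : p.2.2 ∈ G.verts C1 ∩ G.verts p.1 := Finset.mem_inter.mpr ⟨hD1 ▸ hDmem.2, hbP⟩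
        rw [hm1, Finset.mem_singleton] at this
        exact hab this.symm
      · have := hother D hD hD1 hD2
        have hmm : p.2.2 ∈ G.verts D ∩ G.verts p.1 := Finset.mem_inter.mpr ⟨hDmem.2, hbP⟩
        rw [this] at hmm
        simp at hmm
    · have hqp : q = p := by
        by_contra hqp
        have hdisj := T.path_vdisj q hq p hp hqp
        have hqmem := G.adjOn_mem_verts (S := q.1) ⟨e, heq, hor⟩
        exact (Finset.disjoint_left.mp hdisj) hqmem.2 hbP
      subst hqp
      have := hwspec e heq (by rcases hor with h | h <;> rw [h] <;> simp)
      rcases hor with h | h <;> rcases this with h' | h' <;> rw [h] at h' <;>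
        simp [Prod.ext_iff] at h' <;> tauto
  apply G.not_cutPoint_of_splice (S := T.edges) (a := p.2.2) ?_ hcut
  intro z zz hz hzz hadj hadj2
  rw [hclass z hz hadj, hclass zz hzz (G.adjOn_symm hadj2)]

/-- If two cycles share a vertex in a path-free cycle-tree, two non-loop cycles
share a vertex somewhere. -/
lemma CycleTree.shared_vertex_nonloops (T : CycleTree G) (hpe : T.paths = ∅)
    {D D' : Finset E} (hD : D ∈ T.cycles) (hD' : D' ∈ T.cycles) (hne : D ≠ D')
    {a : V} (haD : a ∈ G.verts D) (haD' : a ∈ G.verts D')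
    (hno : ∀ B1 ∈ T.cycles, ∀ B2 ∈ T.cycles, B1 ≠ B2 → a ∈ G.verts B1 → a ∈ G.verts B2 →
      (∃ v ∈ G.verts B1, v ≠ a) → (∃ v ∈ G.verts B2, v ≠ a) → False) : False := by
  have hmemI : a ∈ T.interVerts :=
    mem_interVertsOf_iff.mpr (Or.inl ⟨D, hD, D', hD', hne, haD, haD'⟩)
  have hcut := T.cuts a hmemI
  by_cases hex : ∃ C0 ∈ T.cycles, a ∈ G.verts C0 ∧ ∃ v ∈ G.verts C0, v ≠ a
  · obtain ⟨C0, hC0, haC0, hnl⟩ := hex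
    obtain ⟨α, β, hαa, hβa, hαβ, hβα, hchar⟩ := G.cycle_neighbors (T.cyc_is C0 hC0) haC0 hnl
    have hclass : ∀ z, z ≠ a → G.adjOn T.edges z a → (z = α ∨ z = β) := by
      intro z hz hadj
      obtain ⟨e, he, hor⟩ := hadj
      rcases T.edge_in_block he with ⟨B, hB, heB⟩ | ⟨q, hq, _⟩
      · have hBmem := G.adjOn_mem_verts (S := B) ⟨e, heB, hor⟩
        by_cases hBC : B = C0
        · exact hchar z hz ⟨e, hBC ▸ heB, hor⟩
        · exact absurd (hno B hB C0 hC0 hBC hBmem.2 haC0 ⟨z, hBmem.1, hz⟩ hnl) id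
      · rw [hpe] at hq; simp at hq
    apply G.not_cutPoint_of_splice (S := T.edges) (a := a) ?_ hcut
    intro z zz hz hzz hadj hadj2
    have hsub := T.cyc_subset hC0
    rcases hclass z hz hadj with h1 | h1 <;>
      rcases hclass zz hzz (G.adjOn_symm hadj2) with h2 | h2 <;> rw [h1, h2] <;>
      first
      | exact Relation.ReflTransGen.refl
      | exact G.avoidReach_mono hsub hαβ
      | exact G.avoidReach_mono hsub hβα
  · push_neg at hex
    apply G.not_cutPoint_of_splice (S := T.edges) (a := a) ?_ hcut
    intro z zz hz hzz hadj hadj2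
    exfalso
    obtain ⟨e, he, hor⟩ := hadj
    rcases T.edge_in_block he with ⟨B, hB, heB⟩ | ⟨q, hq, _⟩
    · have hBmem := G.adjOn_mem_verts (S := B) ⟨e, heB, hor⟩
      exact hz (hex B hB hBmem.2 z hBmem.1)
    · rw [hpe] at hq; simp at hq


/-- Build the sub-cycle-tree on a single balanced cycle. -/
lemma CycleTree.singleCycleTree (T : CycleTree G) {C : Finset E} (hC : C ∈ T.cycles)
    (hbal : G.signSet C = 1) :
    ∃ T' : CycleTree G, T'.IsEulerian ∧ T'.edges = C := by
  have hcyc := T.cyc_is C hC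
  have hIV : G.interVertsOf {C} (∅ : Finset (Finset E × V × V)) = ∅ := by
    apply Finset.eq_empty_of_forall_notMem
    intro v hv
    rcases mem_interVertsOf_iff.mp hv with ⟨A, hA, B, hB, hAB, _, _⟩ | ⟨p, hp, _⟩
    · rw [Finset.mem_singleton] at hA hB
      exact hAB (hA.trans hB.symm)
    · simp at hp
  refine ⟨⟨C, {C}, ∅, hcyc.connectedOn, ⟨C, Finset.mem_singleton_self C⟩,
    ?_, ?_, ?_, ?_, ?_, ?_, ?_, ?_, ?_, ?_⟩, ?_, rfl⟩
  · intro A hA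
    rw [Finset.mem_singleton] at hA
    exact hA ▸ hcyc
  · intro A hsub hcy
    rw [Finset.mem_singleton]
    by_contra hne'
    have hmem := T.cyc_all A (hsub.trans (T.cyc_subset hC)) hcy
    have hdisj := T.cyc_disj A hmem C hC hne'
    obtain ⟨e, he⟩ := hcy.nonempty
    exact (Finset.disjoint_left.mp hdisj) he (hsub he)
  · intro p hp; simp at hp
  · simp
  · intro A hA B hB hAB
    rw [Finset.mem_singleton] at hA hB
    exact absurd (hA.trans hB.symm) hAB
  · intro A hA p hp; simp at hp
  · intro p hp; simp at hp
  · intro A hA B hB hAB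
    rw [Finset.mem_singleton] at hA hB
    exact absurd (hA.trans hB.symm) hAB
  · intro p hp; simp at hp
  · intro v hv
    rw [hIV] at hv
    simp at hv
  · show ∀ A ∈ ({C} : Finset (Finset E)),
      if G.signSet A = 1 then Even ((G.verts A ∩ G.interVertsOf {C} ∅).card)
      else Odd ((G.verts A ∩ G.interVertsOf {C} ∅).card)
    intro A hA
    rw [Finset.mem_singleton] at hA
    subst hA
    rw [if_pos hbal, hIV, Finset.inter_empty, Finset.card_empty]
    exact Even.zero

/-- Build the sub-cycle-tree on two unbalanced cycles sharing one vertex. -/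
lemma CycleTree.twoCycleTree (T : CycleTree G) {C1 C2 : Finset E} (h1 : C1 ∈ T.cycles)
    (h2 : C2 ∈ T.cycles) (hne : C1 ≠ C2) {w : V}
    (hw : G.verts C1 ∩ G.verts C2 = {w})
    {x y : V} (hx1 : x ∈ G.verts C1) (hxw : x ≠ w) (hy2 : y ∈ G.verts C2) (hyw : y ≠ w)
    (hs1 : G.signSet C1 = -1) (hs2 : G.signSet C2 = -1) :
    ∃ T' : CycleTree G, T'.IsEulerian ∧ T'.edges = C1 ∪ C2 := by
  have hwmem : w ∈ G.verts C1 ∩ G.verts C2 := by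
    rw [hw]; exact Finset.mem_singleton_self w
  have hw1 : w ∈ G.verts C1 := (Finset.mem_inter.mp hwmem).1
  have hw2 : w ∈ G.verts C2 := (Finset.mem_inter.mp hwmem).2
  have hOnly : ∀ v, v ∈ G.verts C1 → v ∈ G.verts C2 → v = w := by
    intro v hv1 hv2
    have : v ∈ G.verts C1 ∩ G.verts C2 := Finset.mem_inter.mpr ⟨hv1, hv2⟩
    rw [hw, Finset.mem_singleton] at this
    exact this
  have hconn : G.ConnectedOn (C1 ∪ C2) :=
    G.connectedOn_union (T.cyc_is C1 h1).connectedOn (T.cyc_is C2 h2).connectedOn hw1 hw2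
  have hIV : G.interVertsOf {C1, C2} (∅ : Finset (Finset E × V × V)) = {w} := by
    ext v
    rw [Finset.mem_singleton]
    constructor
    · intro hv
      rcases mem_interVertsOf_iff.mp hv with ⟨A, hA, B, hB, hAB, hv1, hv2⟩ | ⟨p, hp, _⟩
      · simp only [Finset.mem_insert, Finset.mem_singleton] at hA hB
        rcases hA with rfl | rfl <;> rcases hB with rfl | rfl
        · exact absurd rfl hAB
        · exact hOnly v hv1 hv2
        · exact hOnly v hv2 hv1
        · exact absurd rfl hAB
      · simp at hp
    · rintro rfl
      exact mem_interVertsOf_iff.mpr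
        (Or.inl ⟨C1, Finset.mem_insert_self _ _, C2, by simp, hne, hw1, hw2⟩)
  refine ⟨⟨C1 ∪ C2, {C1, C2}, ∅, hconn, ⟨C1, Finset.mem_insert_self _ _⟩,
    ?_, ?_, ?_, ?_, ?_, ?_, ?_, ?_, ?_, ?_⟩, ?_, rfl⟩
  · intro A hA
    simp only [Finset.mem_insert, Finset.mem_singleton] at hA
    rcases hA with rfl | rfl
    · exact T.cyc_is _ h1
    · exact T.cyc_is _ h2
  · intro A hsub hcy
    simp only [Finset.mem_insert, Finset.mem_singleton]
    have hsub' : A ⊆ T.edges :=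
      hsub.trans (Finset.union_subset (T.cyc_subset h1) (T.cyc_subset h2))
    have hmem := T.cyc_all A hsub' hcy
    by_contra hcon
    push_neg at hcon
    obtain ⟨e, he⟩ := hcy.nonempty
    rcases Finset.mem_union.mp (hsub he) with h | h
    · exact (Finset.disjoint_left.mp (T.cyc_disj A hmem C1 h1 hcon.1)) he h
    · exact (Finset.disjoint_left.mp (T.cyc_disj A hmem C2 h2 hcon.2)) he h
  · intro p hp; simp at hp
  · simp [Finset.biUnion_insert]
  · intro A hA B hB hAB
    simp only [Finset.mem_insert, Finset.mem_singleton] at hA hB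
    rcases hA with rfl | rfl <;> rcases hB with rfl | rfl
    · exact absurd rfl hAB
    · exact T.cyc_disj _ h1 _ h2 hAB
    · exact T.cyc_disj _ h2 _ h1 hAB
    · exact absurd rfl hAB
  · intro A hA p hp; simp at hp
  · intro p hp; simp at hp
  · intro A hA B hB hAB
    simp only [Finset.mem_insert, Finset.mem_singleton] at hA hB
    rcases hA with rfl | rfl <;> rcases hB with rfl | rfl
    · exact absurd rfl hAB
    · exact T.cyc_meet _ h1 _ h2 hAB
    · exact T.cyc_meet _ h2 _ h1 hAB
    · exact absurd rfl hAB
  · intro p hp; simp at hp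
  · intro v hv
    rw [hIV, Finset.mem_singleton] at hv
    subst hv
    refine ⟨x, ?_, y, ?_, hxw, hyw, ?_, ?_⟩
    · rw [verts_union]; exact Finset.mem_union_left _ hx1
    · rw [verts_union]; exact Finset.mem_union_right _ hy2
    · exact hconn x (by rw [verts_union]; exact Finset.mem_union_left _ hx1) y
        (by rw [verts_union]; exact Finset.mem_union_right _ hy2)
    · intro hcon
      have hstay := G.avoid_stays (S := C1 ∪ C2) (a := v)
        (K := fun z => z ∈ G.verts C1 ∧ z ≠ v) ?_ hcon ⟨hx1, hxw⟩
      · exact hstay.2 (hOnly y hstay.1 hy2)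
      · intro vP wP hK hwne hadj
        obtain ⟨e, he, hor⟩ := hadj
        rcases Finset.mem_union.mp he with h | h
        · exact ⟨(G.adjOn_mem_verts (S := C1) ⟨e, h, hor⟩).2, hwne⟩
        · exact absurd (hOnly vP hK.1 (G.adjOn_mem_verts (S := C2) ⟨e, h, hor⟩).1) hK.2
  · show ∀ A ∈ ({C1, C2} : Finset (Finset E)),
      if G.signSet A = 1 then Even ((G.verts A ∩ G.interVertsOf {C1, C2} ∅).card)
      else Odd ((G.verts A ∩ G.interVertsOf {C1, C2} ∅).card)
    intro A hA
    rw [hIV]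
    simp only [Finset.mem_insert, Finset.mem_singleton] at hA
    rcases hA with rfl | rfl
    · rw [hs1, if_neg (by norm_num), Finset.inter_singleton_of_mem hw1,
        Finset.card_singleton]
      exact odd_one
    · rw [hs2, if_neg (by norm_num), Finset.inter_singleton_of_mem hw2,
        Finset.card_singleton]
      exact odd_one

/-- Build the sub-cycle-tree on two vertex-disjoint unbalanced cycles joined by a path. -/
lemma CycleTree.pathCycleTree (T : CycleTree G) {C1 C2 : Finset E} {p : Finset E × V × V}
    (h1 : C1 ∈ T.cycles) (h2 : C2 ∈ T.cycles) (hne12 : C1 ≠ C2) (hp : p ∈ T.paths)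
    (hm1 : G.verts C1 ∩ G.verts p.1 = {p.2.1}) (hm2 : G.verts C2 ∩ G.verts p.1 = {p.2.2})
    (hdisj : G.verts C1 ∩ G.verts C2 = ∅)
    {x y : V} (hx1 : x ∈ G.verts C1) (hxa : x ≠ p.2.1)
    (hy2 : y ∈ G.verts C2) (hyb : y ≠ p.2.2)
    (hs1 : G.signSet C1 = -1) (hs2 : G.signSet C2 = -1) :
    ∃ T' : CycleTree G, T'.IsEulerian ∧ T'.edges = C1 ∪ C2 ∪ p.1 := by
  have hpis := T.path_is p hp
  have hab : p.2.1 ≠ p.2.2 := hpis.ends_ne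
  have haP : p.2.1 ∈ G.verts p.1 := hpis.left_mem
  have hbP : p.2.2 ∈ G.verts p.1 := hpis.right_mem
  have haC1 : p.2.1 ∈ G.verts C1 := by
    have : p.2.1 ∈ G.verts C1 ∩ G.verts p.1 := by
      rw [hm1]; exact Finset.mem_singleton_self _
    exact (Finset.mem_inter.mp this).1
  have hbC2 : p.2.2 ∈ G.verts C2 := by
    have : p.2.2 ∈ G.verts C2 ∩ G.verts p.1 := by
      rw [hm2]; exact Finset.mem_singleton_self _
    exact (Finset.mem_inter.mp this).1
  have hnC1C2 : ∀ v, v ∈ G.verts C1 → v ∈ G.verts C2 → False := by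
    intro v hv1 hv2
    have : v ∈ G.verts C1 ∩ G.verts C2 := Finset.mem_inter.mpr ⟨hv1, hv2⟩
    rw [hdisj] at this
    simp at this
  have hOnlyA : ∀ v, v ∈ G.verts C1 → v ∈ G.verts p.1 → v = p.2.1 := by
    intro v hv1 hv2
    have : v ∈ G.verts C1 ∩ G.verts p.1 := Finset.mem_inter.mpr ⟨hv1, hv2⟩
    rw [hm1, Finset.mem_singleton] at this
    exact this
  have hOnlyB : ∀ v, v ∈ G.verts C2 → v ∈ G.verts p.1 → v = p.2.2 := by
    intro v hv1 hv2
    have : v ∈ G.verts C2 ∩ G.verts p.1 := Finset.mem_inter.mpr ⟨hv1, hv2⟩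
    rw [hm2, Finset.mem_singleton] at this
    exact this
  have hunion : C1 ∪ C2 ∪ p.1 = (C1 ∪ p.1) ∪ C2 := by
    ext e; simp only [Finset.mem_union]; tauto
  have hconn : G.ConnectedOn (C1 ∪ C2 ∪ p.1) := by
    rw [hunion]
    refine G.connectedOn_union ?_ (T.cyc_is C2 h2).connectedOn ?_ hbC2
    · exact G.connectedOn_union (T.cyc_is C1 h1).connectedOn hpis.connectedOn haC1 haP
    · rw [verts_union]; exact Finset.mem_union_right _ hbP
  have hIV : G.interVertsOf {C1, C2} ({p} : Finset (Finset E × V × V)) = {p.2.1, p.2.2} := by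
    ext v
    simp only [Finset.mem_insert, Finset.mem_singleton]
    constructor
    · intro hv
      rcases mem_interVertsOf_iff.mp hv with ⟨A, hA, B, hB, hAB, hv1, hv2⟩ | ⟨q, hq, h⟩
      · exfalso
        simp only [Finset.mem_insert, Finset.mem_singleton] at hA hB
        rcases hA with rfl | rfl <;> rcases hB with rfl | rfl
        · exact hAB rfl
        · exact hnC1C2 v hv1 hv2
        · exact hnC1C2 v hv2 hv1
        · exact hAB rfl
      · rw [Finset.mem_singleton] at hq
        subst hq
        exact h
    · intro h
      exact mem_interVertsOf_iff.mpr (Or.inr ⟨p, Finset.mem_singleton_self _, h⟩)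
  have hxb : x ≠ p.2.2 := fun h => hnC1C2 x hx1 (h ▸ hbC2)
  have hya : y ≠ p.2.1 := fun h => hnC1C2 y (h ▸ haC1) hy2
  have hxmem : x ∈ G.verts (C1 ∪ C2 ∪ p.1) := by
    rw [verts_union, verts_union]
    exact Finset.mem_union_left _ (Finset.mem_union_left _ hx1)
  have hymem : y ∈ G.verts (C1 ∪ C2 ∪ p.1) := by
    rw [verts_union, verts_union]
    exact Finset.mem_union_left _ (Finset.mem_union_right _ hy2)
  refine ⟨⟨C1 ∪ C2 ∪ p.1, {C1, C2}, {p}, hconn, ⟨C1, Finset.mem_insert_self _ _⟩,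
    ?_, ?_, ?_, ?_, ?_, ?_, ?_, ?_, ?_, ?_⟩, ?_, rfl⟩
  · intro A hA
    simp only [Finset.mem_insert, Finset.mem_singleton] at hA
    rcases hA with rfl | rfl
    · exact T.cyc_is _ h1
    · exact T.cyc_is _ h2
  · intro A hsub hcy
    simp only [Finset.mem_insert, Finset.mem_singleton]
    have hsub' : A ⊆ T.edges := hsub.trans (Finset.union_subset
      (Finset.union_subset (T.cyc_subset h1) (T.cyc_subset h2)) (T.path_subset hp))
    have hmem := T.cyc_all A hsub' hcy
    by_contra hcon
    push_neg at hcon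
    obtain ⟨e, he⟩ := hcy.nonempty
    rcases Finset.mem_union.mp (hsub he) with h | h
    · rcases Finset.mem_union.mp h with h' | h'
      · exact (Finset.disjoint_left.mp (T.cyc_disj A hmem C1 h1 hcon.1)) he h'
      · exact (Finset.disjoint_left.mp (T.cyc_disj A hmem C2 h2 hcon.2)) he h'
    · exact (Finset.disjoint_left.mp (T.cyc_path_disj A hmem p hp)) he h
  · intro q hq
    rw [Finset.mem_singleton] at hq
    rw [hq]
    exact hpis
  · simp [Finset.biUnion_insert]
  · intro A hA B hB hAB
    simp only [Finset.mem_insert, Finset.mem_singleton] at hA hB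
    rcases hA with rfl | rfl <;> rcases hB with rfl | rfl
    · exact absurd rfl hAB
    · exact T.cyc_disj _ h1 _ h2 hAB
    · exact T.cyc_disj _ h2 _ h1 hAB
    · exact absurd rfl hAB
  · intro A hA q hq
    rw [Finset.mem_singleton] at hq
    rw [hq]
    simp only [Finset.mem_insert, Finset.mem_singleton] at hA
    rcases hA with h | h <;> rw [h]
    · exact T.cyc_path_disj _ h1 p hp
    · exact T.cyc_path_disj _ h2 p hp
  · intro q hq r hr hqr
    rw [Finset.mem_singleton] at hq hr
    exact absurd (hq.trans hr.symm) hqr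
  · intro A hA B hB hAB
    simp only [Finset.mem_insert, Finset.mem_singleton] at hA hB
    rcases hA with rfl | rfl <;> rcases hB with rfl | rfl
    · exact absurd rfl hAB
    · exact T.cyc_meet _ h1 _ h2 hAB
    · exact T.cyc_meet _ h2 _ h1 hAB
    · exact absurd rfl hAB
  · intro q hq
    rw [Finset.mem_singleton] at hq
    rw [hq]
    refine ⟨C1, Finset.mem_insert_self _ _, C2, by simp, hne12, hm1, hm2, ?_⟩
    intro A hA hA1 hA2
    simp only [Finset.mem_insert, Finset.mem_singleton] at hA
    rcases hA with h | h
    · exact absurd h hA1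
    · exact absurd h hA2
  · intro v hv
    rw [hIV] at hv
    simp only [Finset.mem_insert, Finset.mem_singleton] at hv
    rcases hv with hveq | hveq
    · -- v = p.2.1
      refine ⟨x, hxmem, y, hymem, by rw [hveq]; exact hxa, by rw [hveq]; exact hya,
        hconn x hxmem y hymem, ?_⟩
      intro hcon
      have hstay := G.avoid_stays (S := C1 ∪ C2 ∪ p.1) (a := v)
        (K := fun z => z ∈ G.verts C1 ∧ z ≠ v) ?_ hcon ⟨hx1, by rw [hveq]; exact hxa⟩
      · exact hnC1C2 y hstay.1 hy2
      · intro vP wP hK hwne hadj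
        obtain ⟨e, he, hor⟩ := hadj
        rcases Finset.mem_union.mp he with h | h
        · rcases Finset.mem_union.mp h with h' | h'
          · exact ⟨(G.adjOn_mem_verts (S := C1) ⟨e, h', hor⟩).2, hwne⟩
          · exact absurd (G.adjOn_mem_verts (S := C2) ⟨e, h', hor⟩).1
              (fun hh => hnC1C2 vP hK.1 hh)
        · exact absurd ((hOnlyA vP hK.1
            (G.adjOn_mem_verts (S := p.1) ⟨e, h, hor⟩).1).trans hveq.symm) hK.2
    · -- v = p.2.2
      refine ⟨y, hymem, x, hxmem, by rw [hveq]; exact hyb, by rw [hveq]; exact hxb,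
        hconn y hymem x hxmem, ?_⟩
      intro hcon
      have hstay := G.avoid_stays (S := C1 ∪ C2 ∪ p.1) (a := v)
        (K := fun z => z ∈ G.verts C2 ∧ z ≠ v) ?_ hcon ⟨hy2, by rw [hveq]; exact hyb⟩
      · exact hnC1C2 x hx1 hstay.1
      · intro vP wP hK hwne hadj
        obtain ⟨e, he, hor⟩ := hadj
        rcases Finset.mem_union.mp he with h | h
        · rcases Finset.mem_union.mp h with h' | h'
          · exact absurd (G.adjOn_mem_verts (S := C1) ⟨e, h', hor⟩).1
              (fun hh => hnC1C2 vP hh hK.1)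
          · exact ⟨(G.adjOn_mem_verts (S := C2) ⟨e, h', hor⟩).2, hwne⟩
        · exact absurd ((hOnlyB vP hK.1
            (G.adjOn_mem_verts (S := p.1) ⟨e, h, hor⟩).1).trans hveq.symm) hK.2
  · show ∀ A ∈ ({C1, C2} : Finset (Finset E)),
      if G.signSet A = 1 then Even ((G.verts A ∩ G.interVertsOf {C1, C2} {p}).card)
      else Odd ((G.verts A ∩ G.interVertsOf {C1, C2} {p}).card)
    intro A hA
    rw [hIV]
    simp only [Finset.mem_insert, Finset.mem_singleton] at hA
    rcases hA with h | h <;> rw [h]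
    · rw [hs1, if_neg (by norm_num)]
      have : G.verts C1 ∩ {p.2.1, p.2.2} = {p.2.1} := by
        ext v
        simp only [Finset.mem_inter, Finset.mem_insert, Finset.mem_singleton]
        constructor
        · rintro ⟨hv1, h | h⟩
          · exact h
          · exact absurd (show v ∈ G.verts C2 by rw [h]; exact hbC2)
              (fun hh => hnC1C2 v hv1 hh)
        · rintro rfl
          exact ⟨haC1, Or.inl rfl⟩
      rw [this, Finset.card_singleton]
      exact odd_one
    · rw [hs2, if_neg (by norm_num)]
      have : G.verts C2 ∩ {p.2.1, p.2.2} = {p.2.2} := by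
        ext v
        simp only [Finset.mem_inter, Finset.mem_insert, Finset.mem_singleton]
        constructor
        · rintro ⟨hv1, h | h⟩
          · exact absurd (show v ∈ G.verts C1 by rw [h]; exact haC1)
              (fun hh => hnC1C2 v hh hv1)
          · exact h
        · rintro rfl
          exact ⟨hbC2, Or.inr rfl⟩
      rw [this, Finset.card_singleton]
      exact odd_one


/-- Main trichotomy for circuits. -/
lemma circuit_trichotomy (T : CycleTree G) (h : G.IsCircuit T) :
    T.TypeI ∨ T.TypeII ∨ T.TypeIII := by
  obtain ⟨hEuler, hmin⟩ := h
  by_cases hbal : ∃ C ∈ T.cycles, G.signSet C = 1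
  · obtain ⟨C, hC, hs⟩ := hbal
    obtain ⟨T', hT'E, hT'ed⟩ := T.singleCycleTree hC hs
    have hedges : T.edges = C := by
      rw [← hT'ed]
      exact (hmin T' hT'E (by rw [hT'ed]; exact T.cyc_subset hC)).symm
    left
    have hcycles : T.cycles = {C} := by
      apply Finset.eq_singleton_iff_unique_mem.mpr
      refine ⟨hC, fun C' hC' => ?_⟩
      by_contra hne'
      have hsub := T.cyc_subset hC'
      rw [hedges] at hsub
      have hdisj := T.cyc_disj C' hC' C hC hne'
      obtain ⟨e, he⟩ := (T.cyc_is C' hC').nonempty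
      exact (Finset.disjoint_left.mp hdisj) he (hsub he)
    have hpaths : T.paths = ∅ := by
      apply Finset.eq_empty_of_forall_notMem
      intro p hp
      have hsub := T.path_subset hp
      rw [hedges] at hsub
      have hdisj := T.cyc_path_disj C hC p hp
      obtain ⟨e, he⟩ := (T.path_is p hp).nonempty
      exact (Finset.disjoint_left.mp hdisj) (hsub he) he
    exact ⟨C, hcycles, hpaths, hs⟩
  · have hunb : ∀ C ∈ T.cycles, G.signSet C = -1 := fun C hCm =>
      (G.signSet_unit C).resolve_left (fun h1 => hbal ⟨C, hCm, h1⟩)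
    by_cases hpe : T.paths = ∅
    · -- no paths: Type II
      obtain ⟨C0, hC0⟩ := T.cycles_nonempty
      have h2c : ∃ C' ∈ T.cycles, C' ≠ C0 := by
        by_contra hone
        push_neg at hone
        have hint : T.interVerts = ∅ := by
          apply Finset.eq_empty_of_forall_notMem
          intro v hv
          rcases mem_interVertsOf_iff.mp hv with ⟨A, hA, B, hB, hAB, _, _⟩ | ⟨p, hp, _⟩
          · exact hAB ((hone A hA).trans (hone B hB).symm)
          · rw [hpe] at hp; simp at hp
        have hodd := hEuler C0 hC0
        rw [hunb C0 hC0, if_neg (by norm_num), hint, Finset.inter_empty,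
          Finset.card_empty] at hodd
        simp at hodd
      obtain ⟨C', hC', hneC⟩ := h2c
      obtain ⟨D, hD, D', hD', hDD, a, haD, haD'⟩ := T.exists_shared hpe hC' hC0 hneC
      by_cases htwo : ∃ a' : V, ∃ B1 ∈ T.cycles, ∃ B2 ∈ T.cycles, B1 ≠ B2 ∧
          a' ∈ G.verts B1 ∧ a' ∈ G.verts B2 ∧
          (∃ v ∈ G.verts B1, v ≠ a') ∧ (∃ v ∈ G.verts B2, v ≠ a')
      · obtain ⟨a', B1, hB1, B2, hB2, hB12, ha1, ha2, ⟨x, hxm, hxa⟩, ⟨y, hym, hya⟩⟩ := htwo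
        have hwsing : G.verts B1 ∩ G.verts B2 = {a'} := by
          apply Finset.eq_singleton_iff_unique_mem.mpr
          refine ⟨Finset.mem_inter.mpr ⟨ha1, ha2⟩, fun v hv => ?_⟩
          exact Finset.card_le_one.mp (T.cyc_meet B1 hB1 B2 hB2 hB12) v hv a'
            (Finset.mem_inter.mpr ⟨ha1, ha2⟩)
        obtain ⟨T', hT'E, hT'ed⟩ := T.twoCycleTree hB1 hB2 hB12 hwsing hxm hxa hym hya
          (hunb B1 hB1) (hunb B2 hB2)
        have hedges : T.edges = B1 ∪ B2 := by
          rw [← hT'ed]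
          refine (hmin T' hT'E ?_).symm
          rw [hT'ed]
          exact Finset.union_subset (T.cyc_subset hB1) (T.cyc_subset hB2)
        right; left
        refine ⟨B1, B2, hB12, ?_, hpe, hunb B1 hB1, hunb B2 hB2, by rw [hwsing]; simp⟩
        apply Finset.Subset.antisymm
        · intro A hA
          simp only [Finset.mem_insert, Finset.mem_singleton]
          by_contra hcon
          push_neg at hcon
          obtain ⟨e, he⟩ := (T.cyc_is A hA).nonempty
          have hsub := T.cyc_subset hA
          rw [hedges] at hsub
          rcases Finset.mem_union.mp (hsub he) with hh | hh
          · exact (Finset.disjoint_left.mp (T.cyc_disj A hA B1 hB1 hcon.1)) he hh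
          · exact (Finset.disjoint_left.mp (T.cyc_disj A hA B2 hB2 hcon.2)) he hh
        · intro A hA
          simp only [Finset.mem_insert, Finset.mem_singleton] at hA
          rcases hA with rfl | rfl
          · exact hB1
          · exact hB2
      · exfalso
        push_neg at htwo
        refine T.shared_vertex_nonloops hpe hD hD' hDD haD haD' ?_
        intro B1 hB1 B2 hB2 h12 hma1 hma2 hn1 hn2
        obtain ⟨v, hv, hva⟩ := hn2
        exact hva (htwo a B1 hB1 B2 hB2 h12 hma1 hma2 hn1 v hv)
    · -- some path: Type III
      obtain ⟨p, hp⟩ := Finset.nonempty_iff_ne_empty.mpr hpe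
      obtain ⟨C1, h1c, C2, h2c, hne12, hm1, hm2, hother⟩ := T.path_meets p hp
      have hpis := T.path_is p hp
      rcases Finset.eq_empty_or_nonempty (G.verts C1 ∩ G.verts C2) with hdisj | ⟨w, hwm⟩
      · obtain ⟨x, hx1, hxa⟩ := T.path_end_nonloop hp h1c h2c hne12 hm1 hm2 hother
        obtain ⟨y, hy2, hyb⟩ := T.path_end_nonloop_right hp h1c h2c hne12 hm1 hm2 hother
        obtain ⟨T', hT'E, hT'ed⟩ := T.pathCycleTree h1c h2c hne12 hp hm1 hm2 hdisj hx1 hxa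
          hy2 hyb (hunb _ h1c) (hunb _ h2c)
        have hedges : T.edges = C1 ∪ C2 ∪ p.1 := by
          rw [← hT'ed]
          refine (hmin T' hT'E ?_).symm
          rw [hT'ed]
          exact Finset.union_subset
            (Finset.union_subset (T.cyc_subset h1c) (T.cyc_subset h2c))
            (T.path_subset hp)
        right; right
        refine ⟨C1, C2, p, hne12, ?_, ?_, hunb _ h1c, hunb _ h2c, hdisj⟩
        · apply Finset.Subset.antisymm
          · intro A hA
            simp only [Finset.mem_insert, Finset.mem_singleton]
            by_contra hcon
            push_neg at hcon
            obtain ⟨e, he⟩ := (T.cyc_is A hA).nonempty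
            have hsub := T.cyc_subset hA
            rw [hedges] at hsub
            rcases Finset.mem_union.mp (hsub he) with hh | hh
            · rcases Finset.mem_union.mp hh with hh' | hh'
              · exact (Finset.disjoint_left.mp (T.cyc_disj A hA C1 h1c hcon.1)) he hh'
              · exact (Finset.disjoint_left.mp (T.cyc_disj A hA C2 h2c hcon.2)) he hh'
            · exact (Finset.disjoint_left.mp (T.cyc_path_disj A hA p hp)) he hh
          · intro A hA
            simp only [Finset.mem_insert, Finset.mem_singleton] at hA
            rcases hA with rfl | rfl
            · exact h1c
            · exact h2c
        · apply Finset.eq_singleton_iff_unique_mem.mpr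
          refine ⟨hp, fun q hq => ?_⟩
          by_contra hne'
          obtain ⟨e, he⟩ := (T.path_is q hq).nonempty
          have hsub := T.path_subset hq
          rw [hedges] at hsub
          have heP : e ∈ p.1 := by
            rcases Finset.mem_union.mp (hsub he) with hh | hh
            · rcases Finset.mem_union.mp hh with hh' | hh'
              · exact absurd hh' (Finset.disjoint_right.mp
                  (T.cyc_path_disj C1 h1c q hq) he)
              · exact absurd hh' (Finset.disjoint_right.mp
                  (T.cyc_path_disj C2 h2c q hq) he)
            · exact hh
          have hvd := T.path_vdisj q hq p hp hne'
          have hv1 : (G.ends e).1 ∈ G.verts q.1 := mem_verts_iff.mpr ⟨e, he, Or.inl rfl⟩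
          have hv2 : (G.ends e).1 ∈ G.verts p.1 := mem_verts_iff.mpr ⟨e, heP, Or.inl rfl⟩
          exact (Finset.disjoint_left.mp hvd) hv1 hv2
      · exfalso
        have hwsing : G.verts C1 ∩ G.verts C2 = {w} := by
          apply Finset.eq_singleton_iff_unique_mem.mpr
          exact ⟨hwm, fun v hv =>
            Finset.card_le_one.mp (T.cyc_meet C1 h1c C2 h2c hne12) v hv w hwm⟩
        have haC1 : p.2.1 ∈ G.verts C1 := by
          have : p.2.1 ∈ G.verts C1 ∩ G.verts p.1 := by
            rw [hm1]; exact Finset.mem_singleton_self _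
          exact (Finset.mem_inter.mp this).1
        have hbC2 : p.2.2 ∈ G.verts C2 := by
          have : p.2.2 ∈ G.verts C2 ∩ G.verts p.1 := by
            rw [hm2]; exact Finset.mem_singleton_self _
          exact (Finset.mem_inter.mp this).1
        have haw : p.2.1 ≠ w := by
          intro hh
          have hw2 : w ∈ G.verts C2 := (Finset.mem_inter.mp hwm).2
          have : p.2.1 ∈ G.verts C2 ∩ G.verts p.1 :=
            Finset.mem_inter.mpr ⟨by rw [hh]; exact hw2, hpis.left_mem⟩
          rw [hm2, Finset.mem_singleton] at this
          exact hpis.ends_ne this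
        have hbw : p.2.2 ≠ w := by
          intro hh
          have hw1 : w ∈ G.verts C1 := (Finset.mem_inter.mp hwm).1
          have : p.2.2 ∈ G.verts C1 ∩ G.verts p.1 :=
            Finset.mem_inter.mpr ⟨by rw [hh]; exact hw1, hpis.right_mem⟩
          rw [hm1, Finset.mem_singleton] at this
          exact hpis.ends_ne this.symm
        obtain ⟨T', hT'E, hT'ed⟩ := T.twoCycleTree h1c h2c hne12 hwsing haC1 haw hbC2 hbw
          (hunb _ h1c) (hunb _ h2c)
        have hedges : T.edges = C1 ∪ C2 := by
          rw [← hT'ed]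
          refine (hmin T' hT'E ?_).symm
          rw [hT'ed]
          exact Finset.union_subset (T.cyc_subset h1c) (T.cyc_subset h2c)
        obtain ⟨e, he⟩ := hpis.nonempty
        have hsub := T.path_subset hp
        rw [hedges] at hsub
        rcases Finset.mem_union.mp (hsub he) with hh | hh
        · exact (Finset.disjoint_left.mp (T.cyc_path_disj C1 h1c p hp)) hh he
        · exact (Finset.disjoint_left.mp (T.cyc_path_disj C2 h2c p hp)) hh he

lemma not_typeI_typeII {T : CycleTree G} (hI : T.TypeI) (hII : T.TypeII) : False := by
  obtain ⟨C, hcycI, _, _⟩ := hI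
  obtain ⟨C1, C2, hne, hcyc, _⟩ := hII
  have m1 : C1 ∈ T.cycles := by rw [hcyc]; exact Finset.mem_insert_self _ _
  have m2 : C2 ∈ T.cycles := by rw [hcyc]; simp
  rw [hcycI, Finset.mem_singleton] at m1 m2
  exact hne (m1.trans m2.symm)

lemma not_typeI_typeIII {T : CycleTree G} (hI : T.TypeI) (hIII : T.TypeIII) : False := by
  obtain ⟨C, hcycI, _, _⟩ := hI
  obtain ⟨C1, C2, P, hne, hcyc, _⟩ := hIII
  have m1 : C1 ∈ T.cycles := by rw [hcyc]; exact Finset.mem_insert_self _ _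
  have m2 : C2 ∈ T.cycles := by rw [hcyc]; simp
  rw [hcycI, Finset.mem_singleton] at m1 m2
  exact hne (m1.trans m2.symm)

lemma not_typeII_typeIII {T : CycleTree G} (hII : T.TypeII) (hIII : T.TypeIII) : False := by
  obtain ⟨_, _, _, _, hpaths2, _⟩ := hII
  obtain ⟨C1, C2, P, _, _, hpaths3, _⟩ := hIII
  rw [hpaths2] at hpaths3
  exact (Finset.singleton_ne_empty P) hpaths3.symm

end Aux


end OSG
/-- every signed-graph circuit is of exactly one of Types I, II, III. -/
theorem OSG.circuit_classification
    {V E : Type} [DecidableEq V] [DecidableEq E] [Fintype E] {G : OSG V E}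
    (T : OSG.CycleTree G) (h : OSG.IsCircuit G T) :
    (T.TypeI ∧ ¬ T.TypeII ∧ ¬ T.TypeIII) ∨
    (¬ T.TypeI ∧ T.TypeII ∧ ¬ T.TypeIII) ∨
    (¬ T.TypeI ∧ ¬ T.TypeII ∧ T.TypeIII) := by
  rcases OSG.circuit_trichotomy T h with h1 | h2 | h3
  · exact Or.inl ⟨h1, fun h2 => OSG.not_typeI_typeII h1 h2,
      fun h3 => OSG.not_typeI_typeIII h1 h3⟩
  · exact Or.inr (Or.inl ⟨fun h1 => OSG.not_typeI_typeII h1 h2, h2,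
      fun h3 => OSG.not_typeII_typeIII h2 h3⟩)
  · exact Or.inr (Or.inr ⟨fun h1 => OSG.not_typeI_typeIII h1 h3,
      fun h2 => OSG.not_typeII_typeIII h2 h3, h3⟩)
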